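/- Let F : ℝⁿ × ℝ^q → ℝ^m be differentiable, E(s, θ, x) twice continuously differentiable, Ẽ(s, θ, u, ω) := E(s, θ, F(u, ω)), and let s_β solve ∇ₛE(s_β, θ, x⋆) + β δ = 0 with x⋆ := F(u⋆, ω), β ↦ s_β differentiable at 0. Define Δx := d/dβ [∇_x E(s_β, θ, x⋆)]|_{β=0}. Then d/dβ [∇_u Ẽ(s_β, θ, u⋆, ω)]|_{β=0} = (∂_u F(u⋆, ω))ᵀ · Δx and d/dβ [∇_ω Ẽ(s_β, θ, u⋆, ω)]|_{β=0} = (∂_ω F(u⋆, ω))ᵀ · Δx. -/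

import Mathlib

open scoped RealInnerProductSpace
noncomputable section
abbrev Euc (n : ℕ) := EuclideanSpace ℝ (Fin n)

lemma inner_gradient_apply {m : ℕ} (h : Euc m → ℝ) (x v : Euc m) :
    ⟪gradient h x, v⟫ = fderiv ℝ h x v := by
  rw [gradient, ← InnerProductSpace.toDual_apply_apply,
    (InnerProductSpace.toDual ℝ (Euc m)).apply_symm_apply]

lemma grad_comp {n m : ℕ} (g : Euc m → ℝ) (f : Euc n → Euc m) (u : Euc n)
    (hg : DifferentiableAt ℝ g (f u)) (hf : DifferentiableAt ℝ f u) :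
    gradient (fun u' => g (f u')) u =
      (ContinuousLinearMap.adjoint (fderiv ℝ f u)) (gradient g (f u)) := by
  apply ext_inner_right ℝ
  intro v
  rw [inner_gradient_apply, ContinuousLinearMap.adjoint_inner_left,
    inner_gradient_apply, show (fun u' => g (f u')) = g ∘ f from rfl,
    fderiv_comp u hg hf, ContinuousLinearMap.comp_apply]

section
variable {m p : ℕ} (E : Euc m → Euc p → Euc m → ℝ)

/-- inclusion of the third slot -/
def Jx (m p : ℕ) : Euc m →L[ℝ] Euc m × Euc p × Euc m :=
  (0 : Euc m →L[ℝ] Euc m).prod ((0 : Euc m →L[ℝ] Euc p).prod (ContinuousLinearMap.id ℝ (Euc m)))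

lemma hasFDerivAt_slice (a : Euc m) (θ : Euc p) (b : Euc m)
    (hE : Differentiable ℝ (fun t : Euc m × Euc p × Euc m => E t.1 t.2.1 t.2.2)) :
    HasFDerivAt (fun x => E a θ x)
      ((fderiv ℝ (fun t : Euc m × Euc p × Euc m => E t.1 t.2.1 t.2.2) (a, θ, b)).comp (Jx m p))
      b := by
  have h1 : HasFDerivAt (fun x : Euc m => ((a, θ, x) : Euc m × Euc p × Euc m)) (Jx m p) b :=
    HasFDerivAt.prodMk (hasFDerivAt_const a b) (HasFDerivAt.prodMk (hasFDerivAt_const θ b) (hasFDerivAt_id b))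
  exact ((hE (a, θ, b)).hasFDerivAt).comp b h1

lemma grad_x_eq (a : Euc m) (θ : Euc p) (b : Euc m)
    (hE : Differentiable ℝ (fun t : Euc m × Euc p × Euc m => E t.1 t.2.1 t.2.2)) :
    gradient (fun x => E a θ x) b = (InnerProductSpace.toDual ℝ (Euc m)).symm
      ((fderiv ℝ (fun t : Euc m × Euc p × Euc m => E t.1 t.2.1 t.2.2) (a, θ, b)).comp (Jx m p)) := by
  rw [gradient, (hasFDerivAt_slice E a θ b hE).fderiv]

end

/-- Implicit BP-EP chaining: with `Δx := d/dβ[∇_x E(s_β,θ,x⋆)]|₀`,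
`d/dβ[∇_u Ẽ(s_β,θ,u⋆,ω)]|₀ = (∂_u F(u⋆,ω))ᵀ·Δx` and
`d/dβ[∇_ω Ẽ(s_β,θ,u⋆,ω)]|₀ = (∂_ω F(u⋆,ω))ᵀ·Δx`. -/
theorem stmt_7 {n q m p : ℕ}
    (F : Euc n → Euc q → Euc m)
    (hF : Differentiable ℝ (Function.uncurry F))
    (E : Euc m → Euc p → Euc m → ℝ)
    (hE : ContDiff ℝ 2 (fun t : Euc m × Euc p × Euc m => E t.1 t.2.1 t.2.2))
    (θ : Euc p) (ustar : Euc n) (ω : Euc q) (δ : Euc m)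
    (xstar : Euc m) (hx : xstar = F ustar ω)
    (s : ℝ → Euc m) (hs : DifferentiableAt ℝ s 0)
    (ε : ℝ) (hε : 0 < ε)
    (hnudge : ∀ β ∈ Set.Ioo (-ε) ε,
      gradient (fun s' => E s' θ xstar) (s β) + β • δ = 0)
    (Δx : Euc m)
    (hΔx : Δx = deriv (fun β => gradient (fun x => E (s β) θ x) xstar) 0) :
    deriv (fun β => gradient (fun u => E (s β) θ (F u ω)) ustar) 0 =
      (ContinuousLinearMap.adjoint (fderiv ℝ (fun u => F u ω) ustar)) Δx ∧
    deriv (fun β => gradient (fun ω' => E (s β) θ (F ustar ω')) ω) 0 =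
      (ContinuousLinearMap.adjoint (fderiv ℝ (fun ω' => F ustar ω') ω)) Δx := by
  set Eu : Euc m × Euc p × Euc m → ℝ := fun t => E t.1 t.2.1 t.2.2 with hEu
  have hEd : Differentiable ℝ Eu := hE.differentiable (by norm_num)
  -- slice differentiability of E in x
  have hslice : ∀ (a b : Euc m), DifferentiableAt ℝ (fun x => E a θ x) b := fun a b =>
    (hasFDerivAt_slice E a θ b hEd).differentiableAt
  -- differentiability of the gradient curve
  have hcurve : DifferentiableAt ℝ (fun β => (s β, θ, xstar) : ℝ → Euc m × Euc p × Euc m) 0 :=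
    DifferentiableAt.prodMk hs ((differentiableAt_const θ).prodMk (differentiableAt_const xstar))
  have hfd : Differentiable ℝ (fderiv ℝ Eu) :=
    (hE.fderiv_right (m := 1) (by norm_num)).differentiable one_ne_zero
  have hk : DifferentiableAt ℝ (fun β => (fderiv ℝ Eu ((s β, θ, xstar))).comp (Jx m p)) 0 :=
    DifferentiableAt.clm_comp ((hfd _).comp 0 hcurve) (differentiableAt_const _)
  have hgeq : (fun β => gradient (fun x => E (s β) θ x) xstar) =
      fun β => (InnerProductSpace.toDual ℝ (Euc m)).symm
        ((fderiv ℝ Eu ((s β, θ, xstar))).comp (Jx m p)) := by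
    funext β
    exact grad_x_eq E (s β) θ xstar hEd
  have hgdiff : DifferentiableAt ℝ (fun β => gradient (fun x => E (s β) θ x) xstar) 0 := by
    rw [hgeq]
    exact ((InnerProductSpace.toDual ℝ
      (Euc m)).symm.toContinuousLinearEquiv.differentiableAt).comp 0 hk
  have key : ∀ (r : ℕ) (G : Euc r → Euc m) (w : Euc r) (hG : DifferentiableAt ℝ G w)
      (hGx : G w = xstar),
      deriv (fun β => gradient (fun u => E (s β) θ (G u)) w) 0 =
        (ContinuousLinearMap.adjoint (fderiv ℝ G w)) Δx := by
    intro r G w hG hGx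
    have heq : (fun β => gradient (fun u => E (s β) θ (G u)) w) =
        fun β => (ContinuousLinearMap.adjoint (fderiv ℝ G w))
          (gradient (fun x => E (s β) θ x) xstar) := by
      funext β
      rw [grad_comp (fun x => E (s β) θ x) G w (hslice _ _) hG, hGx]
    rw [heq, hΔx]
    exact (((ContinuousLinearMap.adjoint
      (fderiv ℝ G w)).hasFDerivAt).comp_hasDerivAt 0 hgdiff.hasDerivAt).deriv
  constructor
  · exact key n (fun u => F u ω) ustar
      ((hF.comp (differentiable_id.prodMk (differentiable_const ω))).differentiableAt) hx.symm
  · exact key q (fun ω' => F ustar ω') ω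
      ((hF.comp ((differentiable_const ustar).prodMk differentiable_id)).differentiableAt) hx.symm
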